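/- For any θ ∈ [0,1], θ ≤ θ_v if and only if Σ_{i∈Top([N], v, θ)} (r_i − θ) v_i ≥ θ, where θ_v is the maximum of R(S, v) over all S ⊆ [N] with |S| ≤ K. -/

import Mathlib

/-- The expected reward `R(S, v)` of an assortment `S`. -/
noncomputable def Rew {N : ℕ} (r v : Fin N → ℝ) (S : Finset (Fin N)) : ℝ :=
  (∑ i ∈ S, r i * v i) / (1 + ∑ i ∈ S, v i)

/-- `θ_v`: the optimal expected reward over assortments of size at most `K`. -/
noncomputable def thetaOpt (N K : ℕ) (r v : Fin N → ℝ) : ℝ :=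
  ((Finset.univ : Finset (Fin N)).powerset.filter (fun S => S.card ≤ K)).sup'
    ⟨∅, by simp⟩ (Rew r v)

/- `Top([N], w, θ)`: take the `min {K, N}` items `i` with the largest values
`(r i − θ) * w i` (ties broken in favor of smaller index), then remove all items
with `r i − θ ≤ 0`. -/
open Classical in
noncomputable def TopSet (N K : ℕ) (r w : Fin N → ℝ) (θ : ℝ) : Finset (Fin N) :=
  ((List.insertionSort (fun i j =>
      (r j - θ) * w j < (r i - θ) * w i ∨
      ((r i - θ) * w i = (r j - θ) * w j ∧ i ≤ j)) (List.finRange N)).take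
    (min K N)).toFinset.filter (fun i => θ < r i)

/-- Key combinatorial lemma: the filtered top-`min K N` set maximizes the sum of `g`
over sets of cardinality at most `K`. -/
private lemma sum_le_top {N : ℕ} (K : ℕ) (g : Fin N → ℝ) (P : Fin N → Prop)
    [DecidablePred P] (hK : 1 ≤ K) (hKN : K ≤ N)
    (l : List (Fin N)) (hnd : l.Nodup) (hlen : l.length = N) (hmem : ∀ i : Fin N, i ∈ l)
    (hsort : ∀ j ∈ l.take (min K N), ∀ i ∈ l.drop (min K N), g i ≤ g j)
    (hgP : ∀ i, P i → 0 ≤ g i) (hgnP : ∀ i, ¬ P i → g i ≤ 0)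
    (hposP : ∀ i, 0 < g i → P i)
    (S : Finset (Fin N)) (hS : S.card ≤ K) :
    ∑ i ∈ S, g i ≤ ∑ i ∈ (l.take (min K N)).toFinset.filter P, g i := by
  classical
  set m := min K N with hm
  set T : Finset (Fin N) := (l.take m).toFinset with hT
  have hTcard : T.card = m := by
    rw [hT, List.toFinset_card_of_nodup (hnd.sublist (List.take_sublist _ _))]
    rw [List.length_take, hlen]
    omega
  have hTmem_le : ∀ i ∉ T, ∀ j ∈ T, g i ≤ g j := by
    intro i hi j hj
    have hil : i ∈ l := hmem i
    have hsplit : i ∈ l.take m ∨ i ∈ l.drop m := by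
      rw [← List.mem_append, List.take_append_drop]; exact hil
    have hidrop : i ∈ l.drop m := by
      rcases hsplit with h | h
      · exact absurd (List.mem_toFinset.mpr h) hi
      · exact h
    exact hsort j (List.mem_toFinset.mp hj) i hidrop
  set Top := T.filter P with hTop
  have hTopnn : ∀ i ∈ Top, 0 ≤ g i := fun i hi => hgP i (Finset.mem_filter.mp hi).2
  set S' := S.filter P with hS'
  have h1 : ∑ i ∈ S, g i ≤ ∑ i ∈ S', g i := by
    have he := Finset.sum_filter_add_sum_filter_not S P g
    have h2 : ∑ i ∈ S.filter (fun i => ¬ P i), g i ≤ 0 :=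
      Finset.sum_nonpos (fun i hi => hgnP i (Finset.mem_filter.mp hi).2)
    linarith
  have key : ∑ i ∈ S' \ T, g i ≤ ∑ i ∈ Top \ S', g i := by
    rcases (S' \ T).eq_empty_or_nonempty with he | hne
    · rw [he, Finset.sum_empty]
      exact Finset.sum_nonneg (fun i hi => hTopnn i (Finset.mem_sdiff.mp hi).1)
    · obtain ⟨i0, hi0⟩ := hne
      have hN : 0 < N := i0.pos
      have hTne : T.Nonempty := Finset.card_pos.mp (by rw [hTcard]; omega)
      set mv := T.inf' hTne g with hmv
      have hle_mv : ∀ i ∈ S' \ T, g i ≤ mv := by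
        intro i hi
        obtain ⟨hiS', hiT⟩ := Finset.mem_sdiff.mp hi
        exact Finset.le_inf' hTne g (fun j hj => hTmem_le i hiT j hj)
      rcases le_or_gt mv 0 with hmv0 | hmv0
      · have hA : ∑ i ∈ S' \ T, g i ≤ 0 :=
          Finset.sum_nonpos (fun i hi => (hle_mv i hi).trans hmv0)
        have hB : 0 ≤ ∑ i ∈ Top \ S', g i :=
          Finset.sum_nonneg (fun i hi => hTopnn i (Finset.mem_sdiff.mp hi).1)
        linarith
      · have hTP : ∀ i ∈ T, P i :=
          fun i hi => hposP i (lt_of_lt_of_le hmv0 (Finset.inf'_le g hi))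
        have hTopT : Top = T := Finset.filter_true_of_mem hTP
        have hcard : (S' \ T).card ≤ (T \ S').card := by
          have e1 := Finset.card_inter_add_card_sdiff S' T
          have e2 := Finset.card_inter_add_card_sdiff T S'
          have h3 : S'.card ≤ m := by
            have h4 : S'.card ≤ S.card := Finset.card_filter_le S P
            have h5 : S'.card ≤ N := by
              have := Finset.card_le_univ S'
              simpa using this
            omega
          have h6 : (S' ∩ T).card = (T ∩ S').card := by rw [Finset.inter_comm]
          omega
        calc ∑ i ∈ S' \ T, g i
            ≤ (S' \ T).card • mv := Finset.sum_le_card_nsmul _ _ _ hle_mv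
          _ ≤ (T \ S').card • mv := by
              rw [nsmul_eq_mul, nsmul_eq_mul]
              exact mul_le_mul_of_nonneg_right (Nat.cast_le.mpr hcard) hmv0.le
          _ ≤ ∑ i ∈ T \ S', g i :=
              Finset.card_nsmul_le_sum _ _ _
                (fun i hi => Finset.inf'_le g (Finset.mem_sdiff.mp hi).1)
          _ = ∑ i ∈ Top \ S', g i := by rw [hTopT]
  have hST : S' ∩ Top = S' ∩ T := by
    ext i
    simp only [hTop, hS', Finset.mem_inter, Finset.mem_filter]
    tauto
  have hSd : S' \ Top = S' \ T := by
    ext i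
    simp only [hTop, hS', Finset.mem_sdiff, Finset.mem_filter]
    tauto
  have hTS : Top ∩ S' = S' ∩ T := by rw [Finset.inter_comm, hST]
  have e1 : ∑ i ∈ S' ∩ Top, g i + ∑ i ∈ S' \ Top, g i = ∑ i ∈ S', g i :=
    Finset.sum_inter_add_sum_sdiff _ _ _
  have e2 : ∑ i ∈ Top ∩ S', g i + ∑ i ∈ Top \ S', g i = ∑ i ∈ Top, g i :=
    Finset.sum_inter_add_sum_sdiff _ _ _
  rw [hST, hSd] at e1
  rw [hTS] at e2
  linarith

/-- For any `θ ∈ [0,1]`, `θ ≤ θ_v` iff `Σ_{i∈Top([N],v,θ)} (r_i − θ) v_i ≥ θ`. -/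
theorem stmt2 (N K : ℕ) (hK : 1 ≤ K) (hKN : K ≤ N) (r v : Fin N → ℝ)
    (hr : ∀ i, 0 < r i ∧ r i ≤ 1) (hv : ∀ i, 0 ≤ v i ∧ v i ≤ 1)
    (θ : ℝ) (hθ : 0 ≤ θ ∧ θ ≤ 1) :
    θ ≤ thetaOpt N K r v ↔ ∑ i ∈ TopSet N K r v θ, (r i - θ) * v i ≥ θ := by
  classical
  -- the score function
  have hrew : ∀ S : Finset (Fin N),
      (θ ≤ Rew r v S ↔ θ ≤ ∑ i ∈ S, (r i - θ) * v i) := by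
    intro S
    have hd : (0:ℝ) < 1 + ∑ i ∈ S, v i := by
      have : 0 ≤ ∑ i ∈ S, v i := Finset.sum_nonneg fun i _ => (hv i).1
      linarith
    have hsum : ∑ i ∈ S, (r i - θ) * v i
        = (∑ i ∈ S, r i * v i) - θ * ∑ i ∈ S, v i := by
      rw [Finset.mul_sum, ← Finset.sum_sub_distrib]
      exact Finset.sum_congr rfl fun i _ => by ring
    simp only [Rew]
    rw [le_div_iff₀ hd, mul_add, mul_one]
    constructor <;> intro h <;> linarith
  -- properties of the sorted list
  set rel : Fin N → Fin N → Prop := fun i j =>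
      (r j - θ) * v j < (r i - θ) * v i ∨
      ((r i - θ) * v i = (r j - θ) * v j ∧ i ≤ j) with hreldef
  haveI : IsTotal (Fin N) rel := by
    constructor
    intro i j
    rcases lt_trichotomy ((r i - θ) * v i) ((r j - θ) * v j) with h | h | h
    · exact Or.inr (Or.inl h)
    · rcases le_total i j with hij | hij
      · exact Or.inl (Or.inr ⟨h, hij⟩)
      · exact Or.inr (Or.inr ⟨h.symm, hij⟩)
    · exact Or.inl (Or.inl h)
  haveI : IsTrans (Fin N) rel := by
    constructor
    rintro i j k (h1 | ⟨h1, h1'⟩) (h2 | ⟨h2, h2'⟩)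
    · exact Or.inl (h2.trans h1)
    · exact Or.inl (by rw [← h2]; exact h1)
    · exact Or.inl (by rw [h1]; exact h2)
    · exact Or.inr ⟨h1.trans h2, h1'.trans h2'⟩
  set l := List.insertionSort rel (List.finRange N) with hl
  have hperm : l.Perm (List.finRange N) := List.perm_insertionSort rel _
  have hnd : l.Nodup := hperm.nodup_iff.mpr (List.nodup_finRange N)
  have hlen : l.length = N := by rw [hperm.length_eq, List.length_finRange]
  have hmem : ∀ i : Fin N, i ∈ l := fun i => hperm.mem_iff.mpr (List.mem_finRange i)
  have hsorted : List.Pairwise rel l := List.pairwise_insertionSort rel _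
  have hsort : ∀ j ∈ l.take (min K N), ∀ i ∈ l.drop (min K N),
      (r i - θ) * v i ≤ (r j - θ) * v j := by
    intro j hj i hi
    have hpw : List.Pairwise rel (l.take (min K N) ++ l.drop (min K N)) := by
      rw [List.take_append_drop]; exact hsorted
    have hr3 := (List.pairwise_append.mp hpw).2.2 j hj i hi
    rcases hr3 with h | ⟨h, _⟩
    · exact h.le
    · exact h.ge
  -- main inequality
  have hmain : ∀ S : Finset (Fin N), S.card ≤ K →
      ∑ i ∈ S, (r i - θ) * v i ≤ ∑ i ∈ TopSet N K r v θ, (r i - θ) * v i := by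
    intro S hS
    have := sum_le_top K (fun i => (r i - θ) * v i) (fun i => θ < r i) hK hKN
      l hnd hlen hmem hsort
      (fun i hi => mul_nonneg (by linarith) (hv i).1)
      (fun i hi => mul_nonpos_of_nonpos_of_nonneg (by simp at hi; linarith) (hv i).1)
      (fun i hi => by
        have hi' : 0 < (r i - θ) * v i := hi
        by_contra hc
        push_neg at hc
        have : (r i - θ) * v i ≤ 0 :=
          mul_nonpos_of_nonpos_of_nonneg (by linarith) (hv i).1
        linarith)
      S hS
    convert this using 2
    unfold TopSet; congr!
  -- TopSet has small cardinality
  have hTopcard : (TopSet N K r v θ).card ≤ K := by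
    have h1 : (TopSet N K r v θ).card ≤ (l.take (min K N)).toFinset.card := by
      apply Finset.card_le_card
      intro i hi
      exact (Finset.mem_filter.mp hi).1
    have h2 : (l.take (min K N)).toFinset.card ≤ (l.take (min K N)).length :=
      l.take (min K N) |>.toFinset_card_le
    have h3 : (l.take (min K N)).length ≤ min K N := by
      rw [List.length_take]; omega
    omega
  constructor
  · intro h
    obtain ⟨S, hSmem, hSle⟩ := (Finset.le_sup'_iff _).mp h
    simp only [Finset.mem_filter, Finset.mem_powerset] at hSmem
    have := (hrew S).mp hSle
    exact le_trans this (hmain S hSmem.2)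
  · intro h
    apply (Finset.le_sup'_iff _).mpr
    refine ⟨TopSet N K r v θ, ?_, (hrew _).mpr h⟩
    simp only [Finset.mem_filter, Finset.mem_powerset]
    exact ⟨Finset.subset_univ _, hTopcard⟩
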